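/- Let 0 < α < 1/2 and let g: [0,1] → ℝ be continuous. For u < s define B(u,r) = ∫_0^1 v^{-α-1}(1 - (u/((r-u)v+u))^α) dv and D₂(s,u) = (c_H α/Γ(α)) s^{-α} ∫_u^s r^α g(r) (s-r)^{α-1} (r-u)^{-α} B(u,r) dr. Then B(s,s) = 0 (interpreting B(u,r) with u = r) and lim_{u→s⁻} D₂(s,u) = 0, in particular: (i) the improper integral defining B(u,r) converges for 0 < u ≤ r; (ii) B(u,r) → 0 as r → u⁺ with u fixed and bounded away from 0. -/

import Mathlib

open MeasureTheory Real intervalIntegral Filter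

/-- `B(u,r) = ∫_0^1 v^{-α-1} (1 - (u/((r-u)v+u))^α) dv`. -/
noncomputable def Bint (α u r : ℝ) : ℝ :=
  ∫ v in (0:ℝ)..1, v ^ (-α - 1) * (1 - (u / ((r - u) * v + u)) ^ α)

section Aux

variable {α u r s : ℝ}

lemma denom_pos (hu : 0 < u) (hur : u ≤ r) {v : ℝ} (hv : 0 ≤ v) :
    0 < (r - u) * v + u := by nlinarith

lemma ratio_mem (hu : 0 < u) (hur : u ≤ r) {v : ℝ} (hv : 0 ≤ v) :
    0 < u / ((r - u) * v + u) ∧ u / ((r - u) * v + u) ≤ 1 := by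
  have hd := denom_pos hu hur hv
  constructor
  · positivity
  · rw [div_le_one hd]; nlinarith

lemma aux_nonneg (hα0 : 0 < α) (hu : 0 < u) (hur : u ≤ r) {v : ℝ} (hv : 0 ≤ v) :
    0 ≤ v ^ (-α - 1) * (1 - (u / ((r - u) * v + u)) ^ α) := by
  obtain ⟨h1, h2⟩ := ratio_mem hu hur hv
  have : (u / ((r - u) * v + u)) ^ α ≤ 1 := Real.rpow_le_one h1.le h2 hα0.le
  have hvp : 0 ≤ v ^ (-α - 1) := Real.rpow_nonneg hv _
  nlinarith

lemma aux_le (hα0 : 0 < α) (hα1 : α < 1) (hu : 0 < u) (hur : u ≤ r) {v : ℝ}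
    (hv : v ∈ Set.Ioc (0:ℝ) 1) :
    v ^ (-α - 1) * (1 - (u / ((r - u) * v + u)) ^ α) ≤ (r - u) / u * v ^ (-α) := by
  have hv0 : 0 < v := hv.1
  have hd := denom_pos hu hur hv0.le
  obtain ⟨h1, h2⟩ := ratio_mem hu hur hv0.le
  set x := u / ((r - u) * v + u) with hx
  have hxα : x ≤ x ^ α := by
    calc x = x ^ (1:ℝ) := (Real.rpow_one x).symm
      _ ≤ x ^ α := Real.rpow_le_rpow_of_exponent_ge h1 h2 hα1.le
  have h1x : 1 - x ^ α ≤ (r - u) * v / u := by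
    have h1x' : 1 - x = (r - u) * v / ((r - u) * v + u) := by
      rw [hx]; field_simp; ring
    have hle : (r - u) * v / ((r - u) * v + u) ≤ (r - u) * v / u := by
      rw [div_le_div_iff₀ hd hu]
      nlinarith [mul_nonneg (mul_nonneg (by linarith : (0:ℝ) ≤ r - u) hv0.le)
        (mul_nonneg (by linarith : (0:ℝ) ≤ r - u) hv0.le)]
    nlinarith
  have hvp : 0 < v ^ (-α - 1) := Real.rpow_pos_of_pos hv0 _
  have hthis : v ^ (-α - 1) * v = v ^ (-α) := by
    calc v ^ (-α - 1) * v = v ^ (-α - 1) * v ^ (1:ℝ) := by rw [Real.rpow_one]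
      _ = v ^ (-α - 1 + 1) := (Real.rpow_add hv0 _ _).symm
      _ = v ^ (-α) := by ring_nf
  have key : v ^ (-α - 1) * ((r - u) * v / u) = (r - u) / u * v ^ (-α) := by
    rw [← hthis]; field_simp
  nlinarith [mul_le_mul_of_nonneg_left h1x hvp.le]

lemma contOn (hu : 0 < u) (hur : u ≤ r) :
    ContinuousOn (fun v => v ^ (-α - 1) * (1 - (u / ((r - u) * v + u)) ^ α))
      (Set.Ioc (0:ℝ) 1) := by
  apply ContinuousOn.mul
  · exact fun v hv => (Real.continuousAt_rpow_const v _ (Or.inl hv.1.ne')).continuousWithinAt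
  · apply ContinuousOn.sub continuousOn_const
    intro v hv
    have hd := denom_pos hu hur hv.1.le
    apply ContinuousAt.continuousWithinAt
    apply ContinuousAt.rpow_const
    · exact continuousAt_const.div (by fun_prop) hd.ne'
    · left
      have := (ratio_mem hu hur hv.1.le).1
      exact this.ne'

lemma rpow_intble (hα1 : α < 1) :
    IntervalIntegrable (fun v : ℝ => v ^ (-α)) volume 0 1 :=
  intervalIntegrable_rpow' (by linarith)

lemma part1 (hα0 : 0 < α) (hα1 : α < 1) (hu : 0 < u) (hur : u ≤ r) :
    IntervalIntegrable
      (fun v => v ^ (-α - 1) * (1 - (u / ((r - u) * v + u)) ^ α)) volume 0 1 := by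
  rw [intervalIntegrable_iff_integrableOn_Ioc_of_le zero_le_one]
  have hgint : IntegrableOn (fun v : ℝ => (r - u) / u * v ^ (-α)) (Set.Ioc 0 1) volume := by
    have := ((rpow_intble (α := α) hα1).const_mul ((r - u) / u))
    rwa [intervalIntegrable_iff_integrableOn_Ioc_of_le zero_le_one] at this
  apply hgint.integrable.mono
  · exact ((contOn hu hur).aestronglyMeasurable measurableSet_Ioc)
  · filter_upwards [ae_restrict_mem measurableSet_Ioc] with v hv
    rw [Real.norm_eq_abs, Real.norm_eq_abs,
      abs_of_nonneg (aux_nonneg hα0 hu hur hv.1.le)]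
    refine le_trans (aux_le hα0 hα1 hu hur hv) (le_abs_self _)

lemma Bint_nonneg (hα0 : 0 < α) (hu : 0 < u) (hur : u ≤ r) : 0 ≤ Bint α u r :=
  intervalIntegral.integral_nonneg zero_le_one fun v hv => aux_nonneg hα0 hu hur hv.1

lemma Bint_le (hα0 : 0 < α) (hα1 : α < 1) (hu : 0 < u) (hur : u ≤ r) :
    Bint α u r ≤ (r - u) / u * (1 / (1 - α)) := by
  have h1 : Bint α u r ≤ ∫ v in (0:ℝ)..1, (r - u) / u * v ^ (-α) := by
    apply intervalIntegral.integral_mono_on zero_le_one (part1 hα0 hα1 hu hur)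
      ((rpow_intble hα1).const_mul _)
    intro v hv
    rcases eq_or_lt_of_le hv.1 with h | h
    · subst h
      simp [Real.zero_rpow (by linarith : -α - 1 ≠ 0), Real.zero_rpow (by linarith : -α ≠ 0)]
    · exact aux_le hα0 hα1 hu hur ⟨h, hv.2⟩
  have h2 : ∫ v in (0:ℝ)..1, (r - u) / u * v ^ (-α) = (r - u) / u * (1 / (1 - α)) := by
    rw [intervalIntegral.integral_const_mul, integral_rpow (Or.inl (by linarith))]
    rw [Real.one_rpow, Real.zero_rpow (by linarith : -α + 1 ≠ 0)]
    ring_nf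
  linarith

lemma Bint_diag (hα0 : 0 < α) (hs : 0 < s) : Bint α s s = 0 := by
  unfold Bint
  simp [div_self hs.ne']

lemma part2 (hα0 : 0 < α) (hα1 : α < 1) (hu : 0 < u) :
    Tendsto (fun r => Bint α u r) (nhdsWithin u (Set.Ioi u)) (nhds 0) := by
  have hub : Tendsto (fun r : ℝ => (r - u) / u * (1 / (1 - α)))
      (nhdsWithin u (Set.Ioi u)) (nhds 0) := by
    have hc : Continuous fun r : ℝ => (r - u) / u * (1 / (1 - α)) := by continuity
    have := hc.tendsto u
    rw [show (u - u) / u * (1 / (1 - α)) = 0 by ring] at this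
    exact this.mono_left nhdsWithin_le_nhds
  apply tendsto_of_tendsto_of_tendsto_of_le_of_le' tendsto_const_nhds hub
  · filter_upwards [self_mem_nhdsWithin] with r hr
    exact Bint_nonneg hα0 hu (le_of_lt hr)
  · filter_upwards [self_mem_nhdsWithin] with r hr
    exact Bint_le hα0 hα1 hu (le_of_lt hr)

lemma rpow_sub_intble (hα0 : 0 < α) (hus : u ≤ s) :
    IntervalIntegrable (fun r : ℝ => (s - r) ^ (α - 1)) volume u s := by
  have h : IntervalIntegrable (fun x : ℝ => x ^ (α - 1)) volume 0 (s - u) :=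
    intervalIntegrable_rpow' (by linarith)
  have := (h.comp_sub_left s).symm
  simpa using this

lemma int_rpow_sub (hα0 : 0 < α) (hus : u ≤ s) :
    ∫ r in u..s, (s - r) ^ (α - 1) = (s - u) ^ α / α := by
  rw [intervalIntegral.integral_comp_sub_left (fun x => x ^ (α - 1)) s, sub_self]
  rw [integral_rpow (Or.inl (by linarith : (-1:ℝ) < α - 1))]
  rw [Real.zero_rpow (by linarith : α - 1 + 1 ≠ 0)]
  ring_nf

lemma integral_bound {g : ℝ → ℝ} {M : ℝ} (hα0 : 0 < α) (hα1 : α < 1)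
    (hs : s ∈ Set.Ioc (0:ℝ) 1) (hu : u ∈ Set.Ioo (s/2) s)
    (hM : ∀ x ∈ Set.Icc (0:ℝ) 1, |g x| ≤ M) :
    |∫ r in u..s, r ^ α * g r * (s - r) ^ (α - 1) * (r - u) ^ (-α) * Bint α u r| ≤
      (M * (s - u) ^ (1 - α) * (2 / (s * (1 - α)))) * ((s - u) ^ α / α) := by
  have hs0 : 0 < s := hs.1
  have hu0 : 0 < u := lt_trans (by linarith) hu.1
  have hus : u ≤ s := hu.2.le
  have hM0 : 0 ≤ M := le_trans (abs_nonneg _) (hM 0 ⟨le_refl _, zero_le_one⟩)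
  set C := M * (s - u) ^ (1 - α) * (2 / (s * (1 - α))) with hC
  have hC0 : 0 ≤ C :=
    mul_nonneg (mul_nonneg hM0 (Real.rpow_nonneg (by linarith) _))
      (div_nonneg (by norm_num) (by nlinarith))
  -- pointwise bound on Ioc u s
  have hpt : ∀ r ∈ Set.Ioc u s,
      ‖r ^ α * g r * (s - r) ^ (α - 1) * (r - u) ^ (-α) * Bint α u r‖ ≤
        C * (s - r) ^ (α - 1) := by
    intro r hr
    have hru : 0 < r - u := by linarith [hr.1]
    have hr0 : 0 < r := lt_trans hu0 hr.1
    have hr1 : r ≤ 1 := le_trans hr.2 hs.2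
    have hsr : 0 ≤ s - r := by linarith [hr.2]
    have hB0 : 0 ≤ Bint α u r := Bint_nonneg hα0 hu0 hr.1.le
    have hBle : Bint α u r ≤ (r - u) / u * (1 / (1 - α)) :=
      Bint_le hα0 hα1 hu0 hr.1.le
    have hpow1 : (0:ℝ) ≤ r ^ α := Real.rpow_nonneg hr0.le _
    have hpow2 : (0:ℝ) ≤ (s - r) ^ (α - 1) := Real.rpow_nonneg hsr _
    have hpow3 : (0:ℝ) ≤ (r - u) ^ (-α) := Real.rpow_nonneg hru.le _
    rw [Real.norm_eq_abs, abs_mul, abs_mul, abs_mul, abs_mul,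
      abs_of_nonneg hpow1, abs_of_nonneg hpow2, abs_of_nonneg hpow3,
      abs_of_nonneg hB0]
    have hr_le : r ^ α ≤ 1 := Real.rpow_le_one hr0.le hr1 hα0.le
    have hg_le : |g r| ≤ M := hM r ⟨hr0.le, hr1⟩
    have step1 : r ^ α * |g r| * (s - r) ^ (α - 1) * (r - u) ^ (-α) * Bint α u r ≤
        1 * M * (s - r) ^ (α - 1) * ((r - u) ^ (-α) * ((r - u) / u * (1 / (1 - α)))) := by
      have e1 : r ^ α * |g r| * (s - r) ^ (α - 1) * (r - u) ^ (-α) * Bint α u r =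
          (r ^ α * |g r|) * ((s - r) ^ (α - 1)) * ((r - u) ^ (-α) * Bint α u r) := by ring
      have e2 : 1 * M * (s - r) ^ (α - 1) * ((r - u) ^ (-α) * ((r - u) / u * (1 / (1 - α)))) =
          (1 * M) * ((s - r) ^ (α - 1)) *
            ((r - u) ^ (-α) * ((r - u) / u * (1 / (1 - α)))) := by ring
      rw [e1, e2]
      exact mul_le_mul
        (mul_le_mul_of_nonneg_right
          (mul_le_mul hr_le hg_le (abs_nonneg _) zero_le_one) hpow2)
        (mul_le_mul_of_nonneg_left hBle hpow3)
        (mul_nonneg hpow3 hB0)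
        (mul_nonneg (by linarith) hpow2)
    have hpowmul : (r - u) ^ (-α) * (r - u) = (r - u) ^ (1 - α) := by
      rw [show (1 - α : ℝ) = -α + 1 by ring, Real.rpow_add hru, Real.rpow_one]
    have step2 : (r - u) ^ (-α) * ((r - u) / u * (1 / (1 - α))) =
        (r - u) ^ (1 - α) * (1 / (u * (1 - α))) := by
      rw [← hpowmul]; field_simp; try ring
    have hrs_le : (r - u) ^ (1 - α) ≤ (s - u) ^ (1 - α) :=
      Real.rpow_le_rpow hru.le (by linarith [hr.2]) (by linarith)
    have hinv_le : 1 / (u * (1 - α)) ≤ 2 / (s * (1 - α)) := by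
      rw [div_le_div_iff₀ (by nlinarith) (by nlinarith)]
      nlinarith [hu.1]
    have step3 : (r - u) ^ (1 - α) * (1 / (u * (1 - α))) ≤
        (s - u) ^ (1 - α) * (2 / (s * (1 - α))) := by
      exact mul_le_mul hrs_le hinv_le (div_nonneg zero_le_one (by nlinarith))
        (Real.rpow_nonneg (by linarith) _)
    calc r ^ α * |g r| * (s - r) ^ (α - 1) * (r - u) ^ (-α) * Bint α u r
        ≤ 1 * M * (s - r) ^ (α - 1) * ((r - u) ^ (-α) * ((r - u) / u * (1 / (1 - α)))) :=
          step1
      _ = M * (s - r) ^ (α - 1) * ((r - u) ^ (1 - α) * (1 / (u * (1 - α)))) := by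
          rw [step2]; ring
      _ ≤ M * (s - r) ^ (α - 1) * ((s - u) ^ (1 - α) * (2 / (s * (1 - α)))) := by
          apply mul_le_mul_of_nonneg_left step3 (by positivity)
      _ = C * (s - r) ^ (α - 1) := by rw [hC]; ring
  -- now the integral bound
  have hCint : IntervalIntegrable (fun r : ℝ => C * (s - r) ^ (α - 1)) volume u s :=
    (rpow_sub_intble hα0 hus).const_mul C
  calc |∫ r in u..s, r ^ α * g r * (s - r) ^ (α - 1) * (r - u) ^ (-α) * Bint α u r|
      ≤ ∫ r in u..s, ‖r ^ α * g r * (s - r) ^ (α - 1) * (r - u) ^ (-α) * Bint α u r‖ := by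
        rw [← Real.norm_eq_abs]
        exact intervalIntegral.norm_integral_le_integral_norm hus
    _ ≤ ∫ r in u..s, C * (s - r) ^ (α - 1) := by
        rw [intervalIntegral.integral_of_le hus, intervalIntegral.integral_of_le hus]
        apply MeasureTheory.integral_mono_of_nonneg
        · exact Eventually.of_forall fun r => norm_nonneg _
        · rw [intervalIntegrable_iff_integrableOn_Ioc_of_le hus] at hCint
          exact hCint
        · filter_upwards [ae_restrict_mem measurableSet_Ioc] with r hr
          exact hpt r hr
    _ = C * ((s - u) ^ α / α) := by
        rw [intervalIntegral.integral_const_mul, int_rpow_sub hα0 hus]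

end Aux

/-- Properties of `B(u,r)` and the diagonal limit of `D₂`. -/
theorem stmt18 (α cH : ℝ) (hα0 : 0 < α) (hα1 : α < 1 / 2) (hcH : 0 < cH)
    (g : ℝ → ℝ) (hg : ContinuousOn g (Set.Icc (0:ℝ) 1)) :
    (∀ u r : ℝ, 0 < u → u ≤ r →
      IntervalIntegrable
        (fun v => v ^ (-α - 1) * (1 - (u / ((r - u) * v + u)) ^ α)) volume 0 1) ∧
    (∀ u : ℝ, 0 < u → Tendsto (fun r => Bint α u r) (nhdsWithin u (Set.Ioi u)) (nhds 0)) ∧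
    (∀ s : ℝ, 0 < s → Bint α s s = 0) ∧
    (∀ s : ℝ, s ∈ Set.Ioc (0:ℝ) 1 →
      Tendsto (fun u : ℝ =>
          (cH * α / Real.Gamma α) * s ^ (-α) *
            ∫ r in u..s, r ^ α * g r * (s - r) ^ (α - 1) * (r - u) ^ (-α) * Bint α u r)
        (nhdsWithin s (Set.Iio s)) (nhds 0)) := by
  have hα1' : α < 1 := by linarith
  refine ⟨fun u r hu hur => part1 hα0 hα1' hu hur,
    fun u hu => part2 hα0 hα1' hu,
    fun s hs => Bint_diag hα0 hs, fun s hs => ?_⟩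
  have hs0 : 0 < s := hs.1
  -- bound for g
  obtain ⟨M, hM⟩ : ∃ M, ∀ x ∈ Set.Icc (0:ℝ) 1, |g x| ≤ M := by
    obtain ⟨M, hM⟩ := (isCompact_Icc).exists_bound_of_continuousOn hg
    exact ⟨M, fun x hx => hM x hx⟩
  set K := (cH * α / Real.Gamma α) * s ^ (-α) with hK
  set C₂ := |K| * (M * (2 / (s * (1 - α)))) * (1 / α) with hC₂
  apply squeeze_zero_norm' (a := fun u => C₂ * (s - u))
  · filter_upwards [Ioo_mem_nhdsLT_of_mem (by constructor <;> linarith :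
      s ∈ Set.Ioc (s/2) s)] with u hu
    have hbound := integral_bound hα0 hα1' hs hu hM
    have hsu : 0 < s - u := by linarith [hu.2]
    have hmul : (s - u) ^ (1 - α) * (s - u) ^ α = s - u := by
      rw [← Real.rpow_add hsu]
      norm_num
    rw [norm_mul]
    calc ‖K‖ * ‖∫ r in u..s, r ^ α * g r * (s - r) ^ (α - 1) * (r - u) ^ (-α) * Bint α u r‖
        ≤ |K| * ((M * (s - u) ^ (1 - α) * (2 / (s * (1 - α)))) * ((s - u) ^ α / α)) := by
          apply mul_le_mul_of_nonneg_left _ (abs_nonneg K)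
          rw [Real.norm_eq_abs] at *
          exact hbound
      _ = C₂ * ((s - u) ^ (1 - α) * (s - u) ^ α) := by rw [hC₂]; field_simp
      _ = C₂ * (s - u) := by rw [hmul]
  · have hc : Continuous fun u : ℝ => C₂ * (s - u) := by continuity
    have := hc.tendsto s
    rw [show C₂ * (s - s) = 0 by ring] at this
    exact this.mono_left nhdsWithin_le_nhds
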